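/- Structure of the zero set on spheres: Let f = I(F) be a slice function on Ω_D, let α, β ∈ ℝⁿ with α + iβ ∈ D, and set 𝕊_x := {α + βI : I ∈ 𝕊} (for x = α + βJ). Then exactly one of the following holds: (1) 𝕊_x contains no zero of f; (2) 𝕊_x consists entirely of zeros of f; (3) 𝕊_x contains exactly one zero of f, and that zero does not lie in ℝⁿ ⊆ ℍⁿ. -/

import Mathlib

/-- The sphere of quaternionic imaginary units. -/
def Sphere : Set (Quaternion ℝ) := {J | J * J = -1}

/-- The point `α + iβ ∈ ℂⁿ`. -/
noncomputable def cpt {n : ℕ} (α β : Fin n → ℝ) : Fin n → ℂ :=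
  fun t => (α t : ℂ) + (β t : ℂ) * Complex.I

/-- The point `α + βJ ∈ ℍⁿ`. -/
noncomputable def qpt {n : ℕ} (α β : Fin n → ℝ) (J : Quaternion ℝ) : Fin n → Quaternion ℝ :=
  fun t => (α t : Quaternion ℝ) + (β t : Quaternion ℝ) * J

/-- Componentwise complex conjugation on `ℂⁿ`. -/
def conjPt {n : ℕ} (z : Fin n → ℂ) : Fin n → ℂ := fun t => (starRingEnd ℂ) (z t)

lemma quatI_mem : (⟨0,1,0,0⟩ : Quaternion ℝ) ∈ Sphere := by
  show (⟨0,1,0,0⟩ : Quaternion ℝ) * ⟨0,1,0,0⟩ = -1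
  ext <;> simp [Quaternion.re_mul, Quaternion.imI_mul, Quaternion.imJ_mul, Quaternion.imK_mul]

lemma neg_mem_sphere {I : Quaternion ℝ} (h : I ∈ Sphere) : -I ∈ Sphere := by
  show _ * _ = _
  simpa using (show I * I = -1 from h)

lemma real_not_sphere (s : ℝ) : (s : Quaternion ℝ) ∉ Sphere := by
  intro h
  have h2 : ((s * s : ℝ) : Quaternion ℝ) = ((-1 : ℝ) : Quaternion ℝ) := by
    push_cast; exact h
  have := Quaternion.coe_injective h2
  nlinarith

theorem zero_set_structure_on_sphere {n : ℕ}
    (D : Set (Fin n → ℂ)) (hD : IsOpen D)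
    (hDconj : ∀ z ∈ D, conjPt z ∈ D)
    (F₁ F₂ : (Fin n → ℂ) → Quaternion ℝ)
    (hF₁ : ∀ z ∈ D, F₁ (conjPt z) = F₁ z)
    (hF₂ : ∀ z ∈ D, F₂ (conjPt z) = - F₂ z)
    (f : (Fin n → Quaternion ℝ) → Quaternion ℝ)
    (hf : ∀ J ∈ Sphere, ∀ α β : Fin n → ℝ, cpt α β ∈ D →
      f (qpt α β J) = F₁ (cpt α β) + J * F₂ (cpt α β))
    (α β : Fin n → ℝ) (hz : cpt α β ∈ D) :
    ((∀ I ∈ Sphere, f (qpt α β I) ≠ 0) ∨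
     (∀ I ∈ Sphere, f (qpt α β I) = 0) ∨
     (∃ I ∈ Sphere, f (qpt α β I) = 0 ∧
        (∀ K ∈ Sphere, f (qpt α β K) = 0 → qpt α β K = qpt α β I) ∧
        ¬ ∃ r : Fin n → ℝ, qpt α β I = fun t => ((r t : ℝ) : Quaternion ℝ))) ∧
    ¬ ((∀ I ∈ Sphere, f (qpt α β I) ≠ 0) ∧ (∀ I ∈ Sphere, f (qpt α β I) = 0)) ∧
    ¬ ((∀ I ∈ Sphere, f (qpt α β I) ≠ 0) ∧
        (∃ I ∈ Sphere, f (qpt α β I) = 0 ∧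
          (∀ K ∈ Sphere, f (qpt α β K) = 0 → qpt α β K = qpt α β I) ∧
          ¬ ∃ r : Fin n → ℝ, qpt α β I = fun t => ((r t : ℝ) : Quaternion ℝ))) ∧
    ¬ ((∀ I ∈ Sphere, f (qpt α β I) = 0) ∧
        (∃ I ∈ Sphere, f (qpt α β I) = 0 ∧
          (∀ K ∈ Sphere, f (qpt α β K) = 0 → qpt α β K = qpt α β I) ∧
          ¬ ∃ r : Fin n → ℝ, qpt α β I = fun t => ((r t : ℝ) : Quaternion ℝ))) := by
  set z := cpt α β with hzdef
  have key : ∀ I ∈ Sphere, f (qpt α β I) = F₁ z + I * F₂ z := fun I hI => hf I hI α β hz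
  refine ⟨?_, ?_, ?_, ?_⟩
  · -- main trichotomy
    by_cases h2 : F₂ z = 0
    · by_cases h1 : F₁ z = 0
      · exact Or.inr (Or.inl fun I hI => by rw [key I hI, h1, h2, mul_zero, add_zero])
      · refine Or.inl fun I hI => by rw [key I hI, h2, mul_zero, add_zero]; exact h1
    · set I₀ := -(F₁ z) * (F₂ z)⁻¹ with hI₀def
      have hzero : ∀ I ∈ Sphere, (f (qpt α β I) = 0 ↔ I = I₀) := by
        intro I hI
        rw [key I hI]
        constructor
        · intro h
          have hIF : I * F₂ z = -(F₁ z) := by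
            exact eq_neg_of_add_eq_zero_right h
          calc I = I * (F₂ z * (F₂ z)⁻¹) := by rw [mul_inv_cancel₀ h2, mul_one]
            _ = (I * F₂ z) * (F₂ z)⁻¹ := (mul_assoc _ _ _).symm
            _ = -(F₁ z) * (F₂ z)⁻¹ := by rw [hIF]
        · rintro rfl
          have : -(F₁ z) * (F₂ z)⁻¹ * F₂ z = -(F₁ z) := by
            rw [mul_assoc, inv_mul_cancel₀ h2, mul_one]
          rw [this, add_neg_cancel]
      have hβ : ∃ t, β t ≠ 0 := by
        by_contra h; push_neg at h
        apply h2
        have hc : conjPt z = z := by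
          funext t; simp [conjPt, hzdef, cpt, h t]
        have h3 := hF₂ z hz
        rw [hc] at h3
        have h4 : (2:ℝ) • F₂ z = 0 := by
          rw [two_smul]
          nth_rewrite 1 [h3]
          exact neg_add_cancel _
        exact (smul_eq_zero.mp h4).resolve_left two_ne_zero
      by_cases hI₀ : I₀ ∈ Sphere
      · refine Or.inr (Or.inr ⟨I₀, hI₀, (hzero I₀ hI₀).2 rfl,
          fun K hK hK0 => by rw [(hzero K hK).1 hK0], ?_⟩)
        rintro ⟨r, hr⟩
        obtain ⟨t, ht⟩ := hβ
        have h3 := congrFun hr t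
        simp only [qpt] at h3
        have h4 : (β t : Quaternion ℝ) * I₀ = ((r t - α t : ℝ) : Quaternion ℝ) := by
          rw [Quaternion.coe_sub]
          exact eq_sub_of_add_eq' h3
        have hb : (β t : Quaternion ℝ) ≠ 0 := fun hh =>
          ht (Quaternion.coe_injective (hh.trans Quaternion.coe_zero.symm))
        have h5 : I₀ = (((β t)⁻¹ * (r t - α t) : ℝ) : Quaternion ℝ) := by
          rw [Quaternion.coe_mul, Quaternion.coe_inv, ← h4, ← mul_assoc,
            inv_mul_cancel₀ hb, one_mul]
        exact real_not_sphere _ (h5 ▸ hI₀)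
      · refine Or.inl fun I hI h0 => hI₀ ?_
        rw [← (hzero I hI).1 h0]
        exact hI
  · rintro ⟨hA, hB⟩
    exact hA _ quatI_mem (hB _ quatI_mem)
  · rintro ⟨hA, I, hI, h0, -⟩
    exact hA I hI h0
  · rintro ⟨hB, I, hI, h0, huniq, hnr⟩
    have hβ : ∃ t, β t ≠ 0 := by
      by_contra h; push_neg at h
      exact hnr ⟨α, by funext t; simp [qpt, h t]⟩
    obtain ⟨t, ht⟩ := hβ
    set qi : Quaternion ℝ := ⟨0,1,0,0⟩ with hqi
    have h1 := huniq qi quatI_mem (hB qi quatI_mem)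
    have h2 := huniq (-qi) (neg_mem_sphere quatI_mem) (hB (-qi) (neg_mem_sphere quatI_mem))
    have h3 : qpt α β qi t = qpt α β (-qi) t := by rw [h1, h2]
    simp only [qpt, mul_neg] at h3
    have h3' : (β t : Quaternion ℝ) * qi = -((β t : Quaternion ℝ) * qi) :=
      add_left_cancel h3
    have h4 : (β t : Quaternion ℝ) * qi = 0 := by
      have h6 : (2:ℝ) • ((β t : Quaternion ℝ) * qi) = 0 := by
        rw [two_smul]
        nth_rewrite 1 [h3']
        exact neg_add_cancel _
      exact (smul_eq_zero.mp h6).resolve_left two_ne_zero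
    rcases mul_eq_zero.mp h4 with h5 | h5
    · exact ht (Quaternion.coe_injective (h5.trans Quaternion.coe_zero.symm))
    · rw [hqi] at h5
      exact one_ne_zero (congrArg QuaternionAlgebra.imI h5)
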